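/- arXiv:1406.3423 — 4 statements merged into one kernel-verified Lean document; each statement's English description precedes it below -/
import Mathlib

section
/- Let R be a Noetherian ring and M a finitely generated R-module. Then the set {dim_R N : N a nonzero submodule of M} equals {dim R/p : p ∈ Ass_R M}. -/
open IsLocalRing

/-- Krull dimension of a module, `⊥` for the zero module. -/
noncomputable def moduleKrullDim (R : Type*) [CommRing R] (M : Type*) [AddCommGroup M]
    [Module R M] : WithBot ℕ∞ :=
  ringKrullDim (R ⧸ Module.annihilator R M)

/-- A finitely generated module over a Noetherian local ring is Cohen-Macaulay if it admits a
regular sequence in the maximal ideal whose length equals its Krull dimension (depth = dim). -/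
def IsCMLocal (R : Type*) [CommRing R] [IsLocalRing R] (M : Type*) [AddCommGroup M]
    [Module R M] : Prop :=
  ∃ rs : List R, (∀ x ∈ rs, x ∈ maximalIdeal R) ∧ RingTheory.Sequence.IsRegular M rs ∧
    (rs.length : WithBot ℕ∞) = moduleKrullDim R M

/-- `D 0 = (0) ⊊ D 1 ⊊ ⋯ ⊊ D ℓ = M` is the dimension filtration of `M`:
each `D i` is the largest submodule of `D (i+1)` of strictly smaller dimension. -/
def IsDimFiltration (R : Type*) [CommRing R] {M : Type*} [AddCommGroup M] [Module R M]
    (D : ℕ → Submodule R M) (ℓ : ℕ) : Prop :=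
  D 0 = ⊥ ∧ D ℓ = ⊤ ∧ (∀ i < ℓ, D i < D (i + 1)) ∧
  (∀ i < ℓ, moduleKrullDim R (D i) < moduleKrullDim R (D (i + 1))) ∧
  ∀ i < ℓ, ∀ N : Submodule R M, N ≤ D (i + 1) →
    moduleKrullDim R N < moduleKrullDim R (D (i + 1)) → N ≤ D i

/-- The `i`-th quotient `D (i+1) / D i` of a filtration of submodules. -/
abbrev filtQuot {R : Type*} [CommRing R] {M : Type*} [AddCommGroup M] [Module R M]
    (D : ℕ → Submodule R M) (i : ℕ) :=
  ↥(D (i + 1)) ⧸ (Submodule.comap (D (i + 1)).subtype (D i))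

/-- A module over a Noetherian local ring is sequentially Cohen-Macaulay if all the quotients of
its dimension filtration are Cohen-Macaulay. -/
def IsSeqCMLocal (R : Type*) [CommRing R] [IsLocalRing R] (M : Type*) [AddCommGroup M]
    [Module R M] : Prop :=
  ∃ (ℓ : ℕ) (D : ℕ → Submodule R M), IsDimFiltration R D ℓ ∧
    ∀ i < ℓ, IsCMLocal R (filtQuot D i)

/-- A module over an arbitrary commutative Noetherian ring is Cohen-Macaulay if its localization at
every maximal ideal of the support is Cohen-Macaulay. -/
def IsCMGlobal (A : Type*) [CommRing A] (N : Type*) [AddCommGroup N] [Module A N] : Prop :=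
  ∀ P : Ideal A, ∀ hP : P.IsMaximal,
    letI := hP.isPrime
    Nontrivial (LocalizedModule P.primeCompl N) →
      IsCMLocal (Localization.AtPrime P) (LocalizedModule P.primeCompl N)

/-- Sequentially Cohen-Macaulay module over an arbitrary commutative ring. -/
def IsSeqCMGlobal (A : Type*) [CommRing A] (N : Type*) [AddCommGroup N] [Module A N] : Prop :=
  ∃ (ℓ : ℕ) (D : ℕ → Submodule A N), IsDimFiltration A D ℓ ∧
    ∀ i < ℓ, IsCMGlobal A (filtQuot D i)

/-- A Noetherian local ring is sequentially Cohen-Macaulay if it is so as a module over itself. -/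
abbrev IsSeqCMLocalRing (R : Type*) [CommRing R] [IsLocalRing R] : Prop := IsSeqCMLocal R R

abbrev IsSeqCMRing (A : Type*) [CommRing A] : Prop := IsSeqCMGlobal A A

section Aux

section RelAnn

variable {R : Type*} [CommRing R] {M : Type*} [AddCommGroup M] [Module R M]

/-- The contraction to `R` of the annihilator of the image of `x` in the localization at the
prime `q`: the set of `r` such that `s * r` kills `x` for some `s ∉ q`. -/
def relAnn (q : Ideal R) [hq : q.IsPrime] (x : M) : Ideal R where
  carrier := {r | ∃ s ∉ q, (s * r) • x = 0}
  zero_mem' := ⟨1, fun h => hq.ne_top ((Ideal.eq_top_iff_one q).2 h), by simp⟩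
  add_mem' := by
    rintro a b ⟨s, hs, hsa⟩ ⟨t, ht, htb⟩
    refine ⟨s * t, fun h => ((hq.mem_or_mem h).elim hs ht), ?_⟩
    have h2 : (s * t * (a + b)) • x = t • ((s * a) • x) + s • ((t * b) • x) := by
      rw [← mul_smul, ← mul_smul, ← add_smul]; congr 1; ring
    rw [h2, hsa, htb, smul_zero, smul_zero, add_zero]
  smul_mem' := by
    rintro c r ⟨s, hs, hsr⟩
    refine ⟨s, hs, ?_⟩
    have : s * (c • r) = c * (s * r) := by simp only [smul_eq_mul]; ring
    rw [this, mul_smul, hsr, smul_zero]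

theorem mem_relAnn {q : Ideal R} [q.IsPrime] {x : M} {r : R} :
    r ∈ relAnn q x ↔ ∃ s ∉ q, (s * r) • x = 0 := Iff.rfl

theorem relAnn_le_of_not_exists {q : Ideal R} [hq : q.IsPrime] {x : M}
    (h : ¬ ∃ t, t ∉ q ∧ t • x = 0) : relAnn q x ≤ q := by
  intro r hr
  obtain ⟨s, hs, hsx⟩ := hr
  by_contra hrq
  exact h ⟨s * r, fun hm => (hq.mem_or_mem hm).elim hs hrq, hsx⟩

/-- Key lemma: over a Noetherian ring, if a prime `q` contains the annihilator of a finitely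
generated module `M`, then `q` contains an associated prime of `M`. -/
theorem exists_assoc_le {R : Type*} [CommRing R] [IsNoetherianRing R]
    {M : Type*} [AddCommGroup M] [Module R M] [Module.Finite R M]
    {q : Ideal R} [hq : q.IsPrime] (hle : Module.annihilator R M ≤ q) :
    ∃ p ∈ associatedPrimes R M, p ≤ q := by
  classical
  -- Step 1: find x with relAnn q x ≤ q
  obtain ⟨T, hT⟩ := Module.Finite.fg_top (R := R) (M := M)
  have hex : ∃ x : M, relAnn q x ≤ q := by
    by_contra hcon
    push_neg at hcon
    have hx : ∀ x : M, ∃ t, t ∉ q ∧ t • x = 0 := by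
      intro x
      by_contra h
      exact absurd (relAnn_le_of_not_exists h) (fun h' => absurd (hcon x) (fun h'' => h'' h'))
    choose t ht1 ht2 using hx
    set u := ∏ x ∈ T, t x with hu_def
    have hu : u ∉ q := fun h => by
      obtain ⟨x, _, hxq⟩ := (Ideal.IsPrime.prod_mem_iff).1 h
      exact ht1 x hxq
    have humem : u ∈ Module.annihilator R M := by
      rw [Module.mem_annihilator]
      intro m
      have hm : m ∈ Submodule.span R (T : Set M) := by rw [hT]; trivial
      induction hm using Submodule.span_induction with
      | mem x hx =>
        have hxT : x ∈ T := hx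
        have : u = (∏ y ∈ T.erase x, t y) * t x := by
          rw [mul_comm, Finset.mul_prod_erase _ _ hxT]
        rw [this, mul_smul, ht2, smul_zero]
      | zero => rw [smul_zero]
      | add y z _ _ hy hz => rw [smul_add, hy, hz, add_zero]
      | smul c y _ hy => rw [smul_comm, hy, smul_zero]
    exact hu (hle humem)
  -- Step 2: maximal element among relAnn's contained in q
  obtain ⟨x1, hx1⟩ := hex
  obtain ⟨P, hPS, hPmax⟩ := set_has_maximal_iff_noetherian.mpr inferInstance
      {P : Ideal R | P ≤ q ∧ ∃ x : M, relAnn q x = P} ⟨relAnn q x1, hx1, x1, rfl⟩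
  obtain ⟨hPq, x₀, hPx⟩ := hPS
  -- Step 3: P is prime
  have hPprime : Ideal.IsPrime P := by
    constructor
    · exact fun h => hq.ne_top (top_le_iff.mp (h ▸ hPq))
    · intro a b hab
      rw [or_iff_not_imp_right]
      intro hb
      have hy1 : P ≤ relAnn q (b • x₀) := by
        intro r hr
        rw [← hPx] at hr
        obtain ⟨s, hs, hsx⟩ := hr
        refine ⟨s, hs, ?_⟩
        have : (s * r) • b • x₀ = b • (s * r) • x₀ := smul_comm _ _ _
        rw [this, hsx, smul_zero]
      have hy2 : a ∈ relAnn q (b • x₀) := by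
        rw [← hPx] at hab
        obtain ⟨s, hs, hsx⟩ := hab
        refine ⟨s, hs, ?_⟩
        rw [← mul_smul, show s * a * b = s * (a * b) by ring, hsx]
      have hy3 : relAnn q (b • x₀) ≤ q := by
        apply relAnn_le_of_not_exists
        rintro ⟨s, hs, hsx⟩
        exact hb (hPx ▸ (⟨s, hs, by rwa [mul_smul]⟩ : b ∈ relAnn q x₀))
      have := hPmax (relAnn q (b • x₀)) ⟨hy3, b • x₀, rfl⟩
      have heq : relAnn q (b • x₀) = P := by
        by_contra hne
        exact this (lt_of_le_of_ne hy1 (Ne.symm hne))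
      exact heq ▸ hy2
  -- Step 4: P is an associated prime
  obtain ⟨TP, hTP⟩ := IsNoetherian.noetherian (R := R) (M := R) P
  have key : ∀ r : R, ∃ s : R, r ∈ P → (s ∉ q ∧ (s * r) • x₀ = 0) := by
    intro r
    by_cases h : r ∈ P
    · obtain ⟨s, hs, hsx⟩ := (hPx ▸ h : r ∈ relAnn q x₀)
      exact ⟨s, fun _ => ⟨hs, hsx⟩⟩
    · exact ⟨1, fun hr => absurd hr h⟩
  choose f hf using key
  set s := ∏ r ∈ TP, f r with hs_def
  have hsq : s ∉ q := by
    intro h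
    obtain ⟨r, hrT, hrq⟩ := (Ideal.IsPrime.prod_mem_iff).1 h
    have hrP : r ∈ P := hTP ▸ Submodule.subset_span hrT
    exact (hf r hrP).1 hrq
  set y := s • x₀ with hy_def
  have hann : P = (R ∙ y).annihilator := by
    apply le_antisymm
    · rw [← hTP, Submodule.span_le]
      intro r hrT
      rw [SetLike.mem_coe, Submodule.mem_annihilator_span_singleton]
      have hrP : r ∈ P := hTP ▸ Submodule.subset_span hrT
      have hsplit : r * s = (∏ z ∈ TP.erase r, f z) * (f r * r) := by
        rw [hs_def, ← Finset.mul_prod_erase _ _ hrT]; ring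
      rw [hy_def, ← mul_smul, hsplit, mul_smul, (hf r hrP).2, smul_zero]
    · intro r hr
      rw [Submodule.mem_annihilator_span_singleton, hy_def, ← mul_smul] at hr
      rw [← hPx]
      exact ⟨s, hsq, by rwa [mul_comm s r]⟩
  exact ⟨P, isAssociatedPrime_iff.mpr ⟨hPprime, y, by rw [Submodule.bot_colon', hann]⟩, hPq⟩

end RelAnn


open Order

theorem ringKrullDim_quotient_mono {R : Type*} [CommRing R] {I J : Ideal R} (h : I ≤ J) :
    ringKrullDim (R ⧸ J) ≤ ringKrullDim (R ⧸ I) :=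
  ringKrullDim_le_of_surjective (Ideal.Quotient.factor h) (fun x => by
    obtain ⟨r, rfl⟩ := Ideal.Quotient.mk_surjective x
    exact ⟨Ideal.Quotient.mk I r, Ideal.Quotient.factor_mk _ _⟩)

theorem ringKrullDim_quotient_le_of_minimal {R : Type*} [CommRing R] {I : Ideal R}
    {c : WithBot ℕ∞} (hc : ∀ p ∈ I.minimalPrimes, ringKrullDim (R ⧸ p) ≤ c) :
    ringKrullDim (R ⧸ I) ≤ c := by
  rw [ringKrullDim, Order.krullDim]
  refine iSup_le fun l => ?_
  let f : PrimeSpectrum (R ⧸ I) → PrimeSpectrum R :=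
    fun p => ⟨p.asIdeal.comap (Ideal.Quotient.mk I), inferInstance⟩
  have hmono : StrictMono f :=
    Monotone.strictMono_of_injective (fun _ _ hab => Ideal.comap_mono hab)
      (fun _ _ h => PrimeSpectrum.ext_iff.mpr <| Ideal.comap_injective_of_surjective _
        Ideal.Quotient.mk_surjective <| congrArg PrimeSpectrum.asIdeal h)
  let l' := l.map f hmono
  have hI0 : I ≤ (l' 0).asIdeal := fun x hx => by
    show Ideal.Quotient.mk I x ∈ (l 0).asIdeal
    rw [Ideal.Quotient.eq_zero_iff_mem.mpr hx]
    exact Submodule.zero_mem _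
  haveI : ((l' 0).asIdeal).IsPrime := (l' 0).2
  obtain ⟨p, hpmin, hple⟩ := Ideal.exists_minimalPrimes_le hI0
  haveI hpprime : p.IsPrime := hpmin.1.1
  have hcontain : ∀ i, p ≤ (l' i).asIdeal := fun i =>
    hple.trans ((PrimeSpectrum.asIdeal_le_asIdeal _ _).mpr
      (l'.strictMono.monotone (Fin.zero_le i)))
  have hprime : ∀ i, ((l' i).asIdeal.map (Ideal.Quotient.mk p)).IsPrime := fun i =>
    Ideal.map_isPrime_of_surjective Ideal.Quotient.mk_surjective
      (by rw [Ideal.mk_ker]; exact hcontain i)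
  have hcomap : ∀ i, Ideal.comap (Ideal.Quotient.mk p)
      ((l' i).asIdeal.map (Ideal.Quotient.mk p)) = (l' i).asIdeal := fun i => by
    rw [Ideal.comap_map_of_surjective _ Ideal.Quotient.mk_surjective,
      ← RingHom.ker_eq_comap_bot, Ideal.mk_ker, sup_eq_left.mpr (hcontain i)]
  have hstep' : ∀ i : Fin l.length,
      ((l' i.castSucc).asIdeal.map (Ideal.Quotient.mk p)) <
        ((l' i.succ).asIdeal.map (Ideal.Quotient.mk p)) := by
    intro i
    have hstep : (l' i.castSucc).asIdeal < (l' i.succ).asIdeal :=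
      (PrimeSpectrum.asIdeal_lt_asIdeal _ _).mpr (l'.step i)
    refine lt_of_le_of_ne (Ideal.map_mono hstep.le) (fun h => hstep.ne ?_)
    rw [← hcomap i.castSucc, h, hcomap i.succ]
  let l'' : LTSeries (PrimeSpectrum (R ⧸ p)) :=
    { length := l.length
      toFun := fun i => ⟨(l' i).asIdeal.map (Ideal.Quotient.mk p), hprime i⟩
      step := fun i => (PrimeSpectrum.asIdeal_lt_asIdeal _ _).mp (hstep' i) }
  have hlen : (l''.length : WithBot ℕ∞) ≤ krullDim (PrimeSpectrum (R ⧸ p)) :=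
    Order.LTSeries.length_le_krullDim l''
  exact le_trans (by exact_mod_cast hlen) (hc p hpmin)

theorem exists_minimal_dim_eq {R : Type*} [CommRing R] [IsNoetherianRing R] {I : Ideal R}
    (hI : I ≠ ⊤) : ∃ p ∈ I.minimalPrimes, ringKrullDim (R ⧸ I) = ringKrullDim (R ⧸ p) := by
  classical
  obtain ⟨m, hm, hIm⟩ := Ideal.exists_le_maximal I hI
  haveI := hm.isPrime
  obtain ⟨p0, hp0, _⟩ := Ideal.exists_minimalPrimes_le hIm
  have hfin : I.minimalPrimes.Finite := by
    rw [Ideal.minimalPrimes_eq_comap]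
    exact (minimalPrimes.finite_of_isNoetherianRing (R ⧸ I)).image _
  obtain ⟨p, hp, hmax⟩ := hfin.toFinset.exists_max_image (fun p => ringKrullDim (R ⧸ p))
    ⟨p0, hfin.mem_toFinset.mpr hp0⟩
  rw [Set.Finite.mem_toFinset] at hp
  refine ⟨p, hp, le_antisymm ?_ (ringKrullDim_quotient_mono hp.1.2)⟩
  exact ringKrullDim_quotient_le_of_minimal fun p' hp' =>
    hmax p' (hfin.mem_toFinset.mpr hp')

end Aux

/-- For a finitely generated module over a Noetherian ring, the set of dimensions
of nonzero submodules equals the set of dimensions `dim R/p` for `p` an associated prime. -/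
theorem stmt3 (R : Type) [CommRing R] [IsNoetherianRing R]
    (M : Type) [AddCommGroup M] [Module R M] [Module.Finite R M] :
    {d : WithBot ℕ∞ | ∃ N : Submodule R M, N ≠ ⊥ ∧ moduleKrullDim R (↥N) = d} =
      {d : WithBot ℕ∞ | ∃ p ∈ associatedPrimes R M, ringKrullDim (R ⧸ p) = d} := by
  ext d
  simp only [Set.mem_setOf_eq]
  constructor
  · rintro ⟨N, hN, rfl⟩
    haveI : Nontrivial ↥N := Submodule.nontrivial_iff_ne_bot.mpr hN
    haveI : Module.Finite R ↥N := Module.Finite.iff_fg.mpr (IsNoetherian.noetherian N)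
    have hIne : Module.annihilator R ↥N ≠ ⊤ := fun h =>
      hN (Submodule.annihilator_eq_top_iff.mp h)
    obtain ⟨pm, hpm, hdim⟩ := exists_minimal_dim_eq (I := Module.annihilator R ↥N) hIne
    haveI : pm.IsPrime := hpm.1.1
    obtain ⟨p, hpass, hple⟩ := exists_assoc_le (M := ↥N) (q := pm) hpm.1.2
    have hpI : Module.annihilator R ↥N ≤ p := by
      obtain ⟨-, y, hy⟩ := isAssociatedPrime_iff.mp hpass
      rw [hy, Submodule.bot_colon']
      intro r hr
      rw [Submodule.mem_annihilator_span_singleton]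
      exact Module.mem_annihilator.mp hr y
    have hppm : p = pm := le_antisymm hple (hpm.2 ⟨hpass.isPrime, hpI⟩ hple)
    refine ⟨p, associatedPrimes.subset_of_injective (Submodule.injective_subtype N)
      hpass, ?_⟩
    show ringKrullDim (R ⧸ p) = ringKrullDim (R ⧸ Module.annihilator R ↥N)
    rw [hppm, ← hdim]
  · rintro ⟨p, hp, rfl⟩
    obtain ⟨hprime, x, hx⟩ := isAssociatedPrime_iff.mp hp
    rw [Submodule.bot_colon'] at hx
    have hx0 : x ≠ 0 := by
      rintro rfl
      exact hprime.ne_top (by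
        rwa [Submodule.span_singleton_eq_bot.mpr rfl, Submodule.annihilator_bot] at hx)
    refine ⟨R ∙ x, by rwa [Ne, Submodule.span_singleton_eq_bot], ?_⟩
    show ringKrullDim (R ⧸ Module.annihilator R ↥(R ∙ x)) = ringKrullDim (R ⧸ p)
    rw [show Module.annihilator R ↥(R ∙ x) = p from hx.symm]
end

section
/- Let R be a 2-dimensional Noetherian local domain of depth 1 and let x be a nonzero element of R. Then R/(x) is a sequentially Cohen-Macaulay ring but R is not a sequentially Cohen-Macaulay ring. -/
open IsLocalRing

set_option maxHeartbeats 1000000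
set_option synthInstance.maxHeartbeats 400000
set_option linter.unusedSectionVars false

open Pointwise RingTheory.Sequence

section AuxAnn

variable {R : Type*} [CommRing R] {M N : Type*} [AddCommGroup M] [Module R M]
  [AddCommGroup N] [Module R N]

lemma annihilator_congr (e : M ≃ₗ[R] N) :
    Module.annihilator R M = Module.annihilator R N := by
  ext r
  simp only [Module.mem_annihilator]
  constructor
  · intro h n
    have h2 := congrArg e (h (e.symm n))
    rw [map_smul, e.apply_symm_apply, map_zero] at h2
    exact h2
  · intro h m
    have h2 := congrArg e.symm (h (e m))
    rw [map_smul, e.symm_apply_apply, map_zero] at h2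
    exact h2

lemma moduleKrullDim_congr (e : M ≃ₗ[R] N) :
    moduleKrullDim R M = moduleKrullDim R N := by
  unfold moduleKrullDim
  rw [annihilator_congr e]

lemma annihilator_eq_top_iff : Module.annihilator R M = ⊤ ↔ Subsingleton M := by
  constructor
  · intro h
    refine subsingleton_iff_forall_eq 0 |>.mpr fun m => ?_
    have : (1 : R) ∈ Module.annihilator R M := h ▸ trivial
    simpa using Module.mem_annihilator.mp this m
  · intro h
    ext r
    simp only [Module.mem_annihilator, Submodule.mem_top, iff_true]
    intro m
    exact Subsingleton.elim _ _

lemma moduleKrullDim_eq_bot_iff : moduleKrullDim R M = ⊥ ↔ Subsingleton M := by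
  unfold moduleKrullDim
  constructor
  · intro h
    by_contra hs
    have : Module.annihilator R M ≠ ⊤ := fun ht => hs (annihilator_eq_top_iff.mp ht)
    have : Nontrivial (R ⧸ Module.annihilator R M) := Ideal.Quotient.nontrivial_iff.mpr this
    have h0 := ringKrullDim_nonneg_of_nontrivial (R := R ⧸ Module.annihilator R M)
    rw [h] at h0
    exact absurd h0 (by simp)
  · intro h
    have : Module.annihilator R M = ⊤ := annihilator_eq_top_iff.mpr h
    rw [this]
    have : Subsingleton (R ⧸ (⊤ : Ideal R)) := Ideal.Quotient.subsingleton_iff.mpr rfl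
    exact ringKrullDim_eq_bot_of_subsingleton

lemma moduleKrullDim_nonneg [Nontrivial M] : 0 ≤ moduleKrullDim R M := by
  have : Module.annihilator R M ≠ ⊤ := by
    intro h
    exact (not_subsingleton M) (annihilator_eq_top_iff.mp h)
  have : Nontrivial (R ⧸ Module.annihilator R M) := Ideal.Quotient.nontrivial_iff.mpr this
  exact ringKrullDim_nonneg_of_nontrivial

end AuxAnn

section AuxAss

variable {R : Type*} [CommRing R] {M : Type*} [AddCommGroup M] [Module R M]

lemma ass_subset_union [IsNoetherianRing R] (N : Submodule R M) :
    associatedPrimes R M ⊆ associatedPrimes R ↥N ∪ associatedPrimes R (M ⧸ N) := by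
  intro p hp'
  obtain ⟨hp, z, rfl⟩ := isAssociatedPrime_iff.mp hp'
  by_cases h : ∀ r : R, r • z ∈ N → r • z = 0
  · right
    refine isAssociatedPrime_iff.mpr ⟨hp, N.mkQ z, ?_⟩
    ext r
    simp only [Submodule.mem_colon_singleton, Submodule.mem_bot]
    rw [← map_smul, N.mkQ_apply, Submodule.Quotient.mk_eq_zero]
    exact ⟨fun hr => hr ▸ N.zero_mem, fun hr => h r hr⟩
  · left
    push_neg at h
    obtain ⟨r, hrN, hr0⟩ := h
    have hrp : r ∉ (⊥ : Submodule R M).colon {z} := by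
      rw [Submodule.mem_colon_singleton, Submodule.mem_bot]; exact hr0
    refine isAssociatedPrime_iff.mpr ⟨hp, ⟨r • z, hrN⟩, ?_⟩
    ext s
    rw [Submodule.mem_colon_singleton, Submodule.mem_bot]
    constructor
    · intro hs
      rw [Submodule.mem_colon_singleton, Submodule.mem_bot]
      refine Subtype.ext ?_
      show s • (r • z) = 0
      rw [smul_comm, hs, smul_zero]
    · intro hs
      have hs' : s • (r • z) = 0 :=
        congrArg Subtype.val ((Submodule.mem_bot _).mp (Submodule.mem_colon_singleton.mp hs))
      have hmem : s * r ∈ (⊥ : Submodule R M).colon {z} := by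
        rw [Submodule.mem_colon_singleton, Submodule.mem_bot, mul_smul]
        exact hs'
      exact (Submodule.mem_bot _).mp
        (Submodule.mem_colon_singleton.mp ((hp.mem_or_mem hmem).resolve_right hrp))

variable [IsNoetherianRing R] [IsNoetherian R M]

lemma ass_quot_finite (N : Submodule R M) : (associatedPrimes R (M ⧸ N)).Finite := by
  induction N using IsWellFounded.induction (· > · : Submodule R M → Submodule R M → Prop) with
  | _ N ih =>
  by_cases hN : N = ⊤
  · subst hN
    have : Subsingleton (M ⧸ (⊤ : Submodule R M)) :=
      Submodule.Quotient.subsingleton_iff.mpr rfl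
    rw [associatedPrimes.eq_empty_of_subsingleton]
    exact Set.finite_empty
  · have hnt : Nontrivial (M ⧸ N) :=
      Submodule.Quotient.nontrivial_iff.mpr hN
    obtain ⟨p, hp⟩ := associatedPrimes.nonempty R (M ⧸ N)
    obtain ⟨hprime, zb, hz⟩ := isAssociatedPrime_iff.mp hp
    obtain ⟨z, rfl⟩ := N.mkQ_surjective zb
    have hz0 : N.mkQ z ≠ 0 := by
      intro h0
      rw [h0] at hz
      apply hprime.ne_top
      rw [hz, eq_top_iff]
      intro r _
      rw [Submodule.mem_colon_singleton, smul_zero]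
      exact Submodule.zero_mem _
    have hzN : z ∉ N := fun h =>
      hz0 (by rw [N.mkQ_apply]; exact (Submodule.Quotient.mk_eq_zero N).mpr h)
    set N' : Submodule R M := N ⊔ Submodule.span R {z} with hN'
    have hNN' : N < N' := by
      refine lt_of_le_of_ne le_sup_left ?_
      intro h
      have hzin : z ∈ N' := Submodule.mem_sup_right (Submodule.mem_span_singleton_self z)
      rw [← h] at hzin
      exact hzN hzin
    have hfin' := ih N' hNN'
    set S : Submodule R (M ⧸ N) := Submodule.span R {N.mkQ z} with hS
    have hsub := ass_subset_union (M := M ⧸ N) S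
    have hSfin : (associatedPrimes R ↥S).Finite := by
      have hker : LinearMap.ker (LinearMap.toSpanSingleton R (M ⧸ N) (N.mkQ z)) = p := by
        ext r
        rw [LinearMap.mem_ker, hz, Submodule.mem_colon_singleton, Submodule.mem_bot]
        rfl
      have e1 : (R ⧸ p) ≃ₗ[R]
          ↥(LinearMap.range (LinearMap.toSpanSingleton R (M ⧸ N) (N.mkQ z))) :=
        (Submodule.quotEquivOfEq _ _ hker).symm ≪≫ₗ
          (LinearMap.toSpanSingleton R (M ⧸ N) (N.mkQ z)).quotKerEquivRange
      have e2 : (R ⧸ p) ≃ₗ[R] ↥S := by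
        rw [hS, LinearMap.span_singleton_eq_range]
        exact e1
      rw [← LinearEquiv.AssociatedPrimes.eq e2]
      have heq : associatedPrimes R (R ⧸ p) = {p.radical} :=
        associatedPrimes.eq_singleton_of_isPrimary hprime.isPrimary
      rw [heq]
      exact Set.finite_singleton _
    have hQfin : (associatedPrimes R ((M ⧸ N) ⧸ S)).Finite := by
      have h1 : Submodule.map N.mkQ N = ⊥ := by
        ext w
        simp only [Submodule.mem_map, Submodule.mem_bot]
        constructor
        · rintro ⟨a, ha, rfl⟩
          rw [N.mkQ_apply]
          exact (Submodule.Quotient.mk_eq_zero N).mpr ha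
        · rintro rfl
          exact ⟨0, N.zero_mem, map_zero _⟩
      have hmap : Submodule.map N.mkQ N' = S := by
        rw [hN', Submodule.map_sup, Submodule.map_span, Set.image_singleton, h1, bot_sup_eq]
      have e3 : ((M ⧸ N) ⧸ S) ≃ₗ[R] M ⧸ N' := by
        rw [← hmap]
        exact Submodule.quotientQuotientEquivQuotient N N' hNN'.le
      rw [LinearEquiv.AssociatedPrimes.eq e3]
      exact hfin'
    exact Set.Finite.subset (hSfin.union hQfin) hsub

lemma ass_finite : (associatedPrimes R M).Finite := by
  have e : (M ⧸ (⊥ : Submodule R M)) ≃ₗ[R] M := Submodule.quotEquivOfEqBot ⊥ rfl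
  rw [← LinearEquiv.AssociatedPrimes.eq e]
  exact ass_quot_finite ⊥

end AuxAss

section AuxMaster

variable {R : Type*} [CommRing R] [IsLocalRing R] [IsNoetherianRing R]
variable (M : Type*) [AddCommGroup M] [Module R M] [IsNoetherian R M] [Nontrivial M]

lemma exists_reg_or_mem_ass :
    (∃ y ∈ maximalIdeal R, IsSMulRegular M y) ∨ maximalIdeal R ∈ associatedPrimes R M := by
  by_cases h : ∃ y ∈ maximalIdeal R, IsSMulRegular M y
  · exact Or.inl h
  right
  push_neg at h
  have hfin : (associatedPrimes R M).Finite := ass_finite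
  have hsub : (maximalIdeal R : Set R) ⊆ ⋃ p ∈ hfin.toFinset, (p : Set R) := by
    intro y hy
    have hz : ∃ z : M, z ≠ 0 ∧ y • z = 0 := by
      have hnr := h y hy
      rw [IsSMulRegular] at hnr
      rw [Function.not_injective_iff] at hnr
      obtain ⟨a, b, hab, hne⟩ := hnr
      exact ⟨a - b, sub_ne_zero.mpr hne, by rw [smul_sub, hab, sub_self]⟩
    have := (Set.ext_iff.mp (biUnion_associatedPrimes_eq_zero_divisors R M) y).mpr hz
    simp only [Set.mem_iUnion] at this ⊢
    obtain ⟨p, hp, hyp⟩ := this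
    exact ⟨p, hfin.mem_toFinset.mpr hp, hyp⟩
  have havoid := (Ideal.subset_union_prime (s := hfin.toFinset) (f := id) ⊤ ⊤
    (fun i hi _ _ => (hfin.mem_toFinset.mp hi).isPrime)).mp hsub
  obtain ⟨p, hpmem, hle⟩ := havoid
  have hpass : p ∈ associatedPrimes R M := hfin.mem_toFinset.mp hpmem
  have hple : p ≤ maximalIdeal R := le_maximalIdeal hpass.isPrime.ne_top
  have : p = maximalIdeal R := le_antisymm hple hle
  rwa [← this]

end AuxMaster

section AuxDim

variable {A : Type*} [CommRing A] [IsLocalRing A]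

lemma spec_dim_le_zero (h : ∀ p : PrimeSpectrum A, p.asIdeal = maximalIdeal A) :
    ringKrullDim A ≤ 0 := by
  have : Subsingleton (PrimeSpectrum A) :=
    ⟨fun p q => PrimeSpectrum.ext ((h p).trans (h q).symm)⟩
  exact Order.krullDim_nonpos_of_subsingleton

lemma quotdim_le_zero_of_pow_le {I : Ideal A} {k : ℕ} (h : maximalIdeal A ^ k ≤ I) :
    ringKrullDim (A ⧸ I) ≤ 0 := by
  have : Subsingleton (PrimeSpectrum (A ⧸ I)) := by
    have key : ∀ q : PrimeSpectrum (A ⧸ I),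
        Ideal.comap (Ideal.Quotient.mk I) q.asIdeal = maximalIdeal A := by
      intro q
      have hIle : I ≤ Ideal.comap (Ideal.Quotient.mk I) q.asIdeal := by
        intro a ha
        simp only [Ideal.mem_comap, Ideal.Quotient.eq_zero_iff_mem.mpr ha]
        exact q.asIdeal.zero_mem
      have hple : maximalIdeal A ≤ Ideal.comap (Ideal.Quotient.mk I) q.asIdeal := by
        have : (maximalIdeal A) ^ k ≤ Ideal.comap (Ideal.Quotient.mk I) q.asIdeal :=
          le_trans h hIle
        exact Ideal.IsPrime.le_of_pow_le (hP := q.isPrime.comap _) this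
      exact le_antisymm (le_maximalIdeal (q.isPrime.comap _).ne_top) hple
    refine ⟨fun p q => PrimeSpectrum.ext ?_⟩
    exact Ideal.comap_injective_of_surjective _ Ideal.Quotient.mk_surjective
      ((key p).trans (key q).symm)
  exact Order.krullDim_nonpos_of_subsingleton

lemma dim_le_zero_of_pow_bot {k : ℕ} (h : maximalIdeal A ^ k = ⊥) :
    ringKrullDim A ≤ 0 := by
  refine spec_dim_le_zero fun p => ?_
  have : maximalIdeal A ^ k ≤ p.asIdeal := h ▸ bot_le
  exact le_antisymm (le_maximalIdeal p.isPrime.ne_top)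
    (Ideal.IsPrime.le_of_pow_le (hP := p.isPrime) this)

variable [IsNoetherianRing A]

lemma pow_le_of_quotdim_le_zero {I : Ideal A} (hI : I ≠ ⊤)
    (h : ringKrullDim (A ⧸ I) ≤ 0) : ∃ k, maximalIdeal A ^ k ≤ I := by
  have hprimes : ∀ J : Ideal A, I ≤ J → J.IsPrime → J = maximalIdeal A := by
    intro J hIJ hJ
    by_contra hne
    have hJm : J < maximalIdeal A := lt_of_le_of_ne (le_maximalIdeal hJ.ne_top) hne
    -- build a chain of length 1 in Spec (A ⧸ I)
    have hk : RingHom.ker (Ideal.Quotient.mk I) ≤ J := by rw [Ideal.mk_ker]; exact hIJ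
    have hkm : RingHom.ker (Ideal.Quotient.mk I) ≤ maximalIdeal A := by
      rw [Ideal.mk_ker]; exact le_trans hIJ hJm.le
    have hJ' : (J.map (Ideal.Quotient.mk I)).IsPrime :=
      Ideal.map_isPrime_of_surjective Ideal.Quotient.mk_surjective hk
    have hm' : ((maximalIdeal A).map (Ideal.Quotient.mk I)).IsPrime :=
      Ideal.map_isPrime_of_surjective Ideal.Quotient.mk_surjective hkm
    have hcomap : ∀ K : Ideal A, I ≤ K →
        Ideal.comap (Ideal.Quotient.mk I) (K.map (Ideal.Quotient.mk I)) = K := by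
      intro K hK
      rw [Ideal.comap_map_of_surjective _ Ideal.Quotient.mk_surjective]
      have : Ideal.comap (Ideal.Quotient.mk I) ⊥ = I := by
        rw [← RingHom.ker_eq_comap_bot, Ideal.mk_ker]
      rw [this, sup_eq_left.mpr hK]
    have hltI : J.map (Ideal.Quotient.mk I) < (maximalIdeal A).map (Ideal.Quotient.mk I) := by
      refine lt_of_le_of_ne (Ideal.map_mono hJm.le) ?_
      intro heq
      apply hne
      rw [← hcomap J hIJ, ← hcomap (maximalIdeal A) (le_trans hIJ hJm.le), heq]
    have hlt : (⟨J.map (Ideal.Quotient.mk I), hJ'⟩ : PrimeSpectrum (A ⧸ I)) <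
        ⟨(maximalIdeal A).map (Ideal.Quotient.mk I), hm'⟩ :=
      (PrimeSpectrum.asIdeal_lt_asIdeal _ _).mp hltI
    let c : LTSeries (PrimeSpectrum (A ⧸ I)) :=
      (RelSeries.singleton _ (⟨(maximalIdeal A).map (Ideal.Quotient.mk I), hm'⟩ :
        PrimeSpectrum (A ⧸ I))).cons _ hlt
    have hlen := Order.LTSeries.length_le_krullDim c
    have hc1 : c.length = 1 := rfl
    rw [hc1] at hlen
    have hle : (1 : WithBot ℕ∞) ≤ 0 := le_trans hlen h
    exact absurd hle (by norm_num)
  have hrad : I.radical = maximalIdeal A := by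
    rw [Ideal.radical_eq_sInf]
    refine le_antisymm (sInf_le ⟨le_maximalIdeal hI, inferInstance⟩) (le_sInf ?_)
    rintro J ⟨hIJ, hJ⟩
    rw [hprimes J hIJ hJ]
  obtain ⟨n, hn⟩ := Ideal.exists_radical_pow_le_of_fg I (IsNoetherian.noetherian _)
  exact ⟨n, by rwa [hrad] at hn⟩

end AuxDim

section AuxMore

variable {A : Type*} [CommRing A]

lemma mem_ann_submodule (N : Submodule A A) (r : A) :
    r ∈ Module.annihilator A ↥N ↔ ∀ a ∈ N, r • a = 0 := by
  rw [Module.mem_annihilator]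
  constructor
  · intro h a ha
    exact congrArg Subtype.val (h ⟨a, ha⟩)
  · intro h m
    exact Subtype.ext (h m.1 m.2)

lemma ann_quot (I : Ideal A) : Module.annihilator A (A ⧸ I) = I := by
  ext r
  rw [Module.mem_annihilator]
  constructor
  · intro h
    have h1 := h (Ideal.Quotient.mk I 1)
    rw [show (Ideal.Quotient.mk I 1) = Submodule.Quotient.mk (1 : A) from rfl,
      ← Submodule.Quotient.mk_smul, smul_eq_mul, mul_one] at h1
    exact (Submodule.Quotient.mk_eq_zero I).mp h1
  · intro hr q
    obtain ⟨a, rfl⟩ := Submodule.Quotient.mk_surjective I q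
    rw [← Submodule.Quotient.mk_smul, Submodule.Quotient.mk_eq_zero, smul_eq_mul]
    exact I.mul_mem_right a hr

lemma ann_self : Module.annihilator A A = ⊥ := by
  ext r
  rw [Module.mem_annihilator, Submodule.mem_bot]
  exact ⟨fun h => by simpa using h 1, fun h m => by rw [h, zero_smul]⟩

lemma moduleKrullDim_self : moduleKrullDim A A = ringKrullDim A := by
  unfold moduleKrullDim
  rw [ann_self]
  exact ringKrullDim_eq_of_ringEquiv (RingEquiv.quotientBot A)

lemma moduleKrullDim_top : moduleKrullDim A (⊤ : Submodule A A) = ringKrullDim A := by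
  rw [moduleKrullDim_congr (Submodule.topEquiv (R := A) (M := A)), moduleKrullDim_self]

lemma moduleKrullDim_quot_ideal (I : Ideal A) :
    moduleKrullDim A (A ⧸ I) = ringKrullDim (A ⧸ I) := by
  unfold moduleKrullDim
  rw [ann_quot]

lemma wb_le_zero_of_lt_one {x : WithBot ℕ∞} (h : x < 1) : x ≤ 0 := by
  induction x using WithBot.recBotCoe with
  | bot => exact bot_le
  | coe x =>
    have hx : x < 1 := by exact_mod_cast h
    have : x = 0 := ENat.lt_one_iff_eq_zero.mp hx
    subst this
    exact_mod_cast le_refl (0 : ℕ∞)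

lemma wb_eq_one_of {x : WithBot ℕ∞} (h1 : ¬ x ≤ 0) (h2 : x ≤ 1) : x = 1 := by
  refine le_antisymm h2 ?_
  induction x using WithBot.recBotCoe with
  | bot => exact absurd bot_le h1
  | coe x =>
    have hx : x ≠ 0 := fun h => h1 (by rw [h]; exact_mod_cast le_refl (0:ℕ∞))
    exact_mod_cast ENat.one_le_iff_ne_zero.mpr hx

lemma mem_smul_top_iff {M : Type*} [AddCommGroup M] [Module A M] (y : A) (q : M) :
    q ∈ (y • ⊤ : Submodule A M) ↔ ∃ b, y • b = q := by
  rw [← SetLike.mem_coe, Submodule.coe_pointwise_smul]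
  constructor
  · rintro ⟨b, -, rfl⟩
    exact ⟨b, rfl⟩
  · rintro ⟨b, rfl⟩
    exact ⟨b, trivial, rfl⟩

-- quotient of top submodule equiv
lemma map_topEquiv_comap {M : Type*} [AddCommGroup M] [Module A M] (N : Submodule A M) :
    Submodule.map (Submodule.topEquiv (R := A) (M := M) : ↥(⊤ : Submodule A M) →ₗ[A] M)
      (Submodule.comap (⊤ : Submodule A M).subtype N) = N := by
  ext a
  simp only [Submodule.mem_map, Submodule.mem_comap]
  constructor
  · rintro ⟨b, hb, rfl⟩
    exact hb
  · intro ha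
    exact ⟨⟨a, trivial⟩, ha, rfl⟩

noncomputable def topQuotEquiv {M : Type*} [AddCommGroup M] [Module A M] (N : Submodule A M) :
    (↥(⊤ : Submodule A M) ⧸ (Submodule.comap (⊤ : Submodule A M).subtype N)) ≃ₗ[A] M ⧸ N :=
  Submodule.Quotient.equiv _ _ (Submodule.topEquiv) (map_topEquiv_comap N)

noncomputable def botQuotEquiv {M : Type*} [AddCommGroup M] [Module A M] (N : Submodule A M) :
    (↥N ⧸ (Submodule.comap N.subtype (⊥ : Submodule A M))) ≃ₗ[A] ↥N :=
  Submodule.quotEquivOfEqBot _ (by rw [Submodule.comap_bot, Submodule.ker_subtype])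

end AuxMore

section Main

variable {A : Type*} [CommRing A] [IsLocalRing A] [IsNoetherianRing A]

lemma seqCM_simple
    (hmax : ∀ N : Submodule A A, moduleKrullDim A ↥N < ringKrullDim A → N = ⊥)
    (hCM : IsCMLocal A A) : IsSeqCMLocal A A := by
  refine ⟨1, fun i => if i = 0 then ⊥ else ⊤, ⟨by simp, by simp, ?_, ?_, ?_⟩, ?_⟩
  · intro i hi
    have : i = 0 := by omega
    subst this
    show (⊥ : Submodule A A) < ⊤
    refine lt_of_le_of_ne bot_le ?_
    intro h
    have h1 : (1 : A) ∈ (⊥ : Submodule A A) := h ▸ trivial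
    exact one_ne_zero ((Submodule.mem_bot A).mp h1)
  · intro i hi
    have : i = 0 := by omega
    subst this
    show moduleKrullDim A ↥(⊥ : Submodule A A) < moduleKrullDim A ↥(⊤ : Submodule A A)
    rw [moduleKrullDim_eq_bot_iff.mpr inferInstance, moduleKrullDim_top]
    refine lt_of_lt_of_le (show (⊥ : WithBot ℕ∞) < 0 from bot_lt_iff_ne_bot.mpr (by norm_num)) ?_
    exact ringKrullDim_nonneg_of_nontrivial
  · intro i hi N hle hdim
    have : i = 0 := by omega
    subst this
    show N ≤ ⊥
    rw [show moduleKrullDim A ↥((fun i => if i = 0 then (⊥ : Submodule A A) else ⊤) (0 + 1)) =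
      ringKrullDim A from moduleKrullDim_top] at hdim
    exact le_of_eq (hmax N hdim)
  · intro i hi
    have : i = 0 := by omega
    subst this
    have e : filtQuot (fun i => if i = 0 then (⊥ : Submodule A A) else ⊤) 0 ≃ₗ[A] A :=
      (topQuotEquiv (⊥ : Submodule A A)).trans (Submodule.quotEquivOfEqBot _ rfl)
    obtain ⟨rs, h1, h2, h3⟩ := hCM
    refine ⟨rs, h1, (LinearEquiv.isRegular_congr e rs).mpr h2, ?_⟩
    rw [moduleKrullDim_congr e, moduleKrullDim_self]
    rw [moduleKrullDim_self] at h3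
    exact h3

lemma seqCM_of_dim_le_one (hd : ringKrullDim A ≤ 1) : IsSeqCMLocal A A := by
  by_cases h0 : ringKrullDim A ≤ 0
  · have hd0 : ringKrullDim A = 0 := le_antisymm h0 ringKrullDim_nonneg_of_nontrivial
    refine seqCM_simple ?_ ?_
    · intro N hN
      by_contra hNb
      have : Nontrivial ↥N := Submodule.nontrivial_iff_ne_bot.mpr hNb
      have h1 : (0 : WithBot ℕ∞) ≤ moduleKrullDim A ↥N := moduleKrullDim_nonneg
      rw [hd0] at hN
      exact absurd (lt_of_le_of_lt h1 hN) (lt_irrefl _)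
    · refine ⟨[], by simp, IsRegular.nil A A, ?_⟩
      rw [moduleKrullDim_self, hd0]
      simp
  · have hd1 : ringKrullDim A = 1 := wb_eq_one_of h0 hd
    rcases exists_reg_or_mem_ass (R := A) A with ⟨y, hym, hyreg⟩ | hass
    · -- positive depth: A is CM
      refine seqCM_simple ?_ ?_
      · intro N hN
        rcases eq_or_ne N ⊥ with rfl | hNb
        · rfl
        · have hnt : Nontrivial ↥N := Submodule.nontrivial_iff_ne_bot.mpr hNb
          have hann : Module.annihilator A ↥N ≠ ⊤ := fun h =>
            (not_subsingleton ↥N) (annihilator_eq_top_iff.mp h)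
          rw [hd1] at hN
          have hdim : ringKrullDim (A ⧸ Module.annihilator A ↥N) ≤ 0 := wb_le_zero_of_lt_one hN
          obtain ⟨k, hk⟩ := pow_le_of_quotdim_le_zero hann hdim
          ext a
          simp only [Submodule.mem_bot]
          refine ⟨fun ha => ?_, fun ha => ha ▸ N.zero_mem⟩
          have hka : y ^ k • a = 0 :=
            (mem_ann_submodule N (y ^ k)).mp (hk (Ideal.pow_mem_pow hym k)) a ha
          exact (hyreg.pow k) (show y ^ k • a = y ^ k • 0 by rw [hka, smul_zero])
      · refine ⟨[y], by simpa using hym, ?_, ?_⟩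
        · rw [isRegular_cons_iff]
          refine ⟨hyreg, ?_⟩
          have : Nontrivial (QuotSMulTop y A) := by
            refine Submodule.Quotient.nontrivial_iff.mpr ?_
            intro htop
            have h1 : (1 : A) ∈ (y • ⊤ : Submodule A A) := by rw [htop]; exact Submodule.mem_top
            obtain ⟨b, hb⟩ := (mem_smul_top_iff y 1).mp h1
            rw [smul_eq_mul] at hb
            exact (mem_maximalIdeal y).mp hym (IsUnit.of_mul_eq_one b hb)
          exact IsRegular.nil A _
        · rw [moduleKrullDim_self, hd1]
          simp
    · -- depth zero case
      set f : ℕ →o Ideal A := ⟨fun k => (⊥ : Ideal A).colon (((maximalIdeal A) ^ k : Ideal A) : Set A), by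
        intro k l hkl r hr
        rw [Submodule.mem_colon] at hr ⊢
        exact fun p hp => hr p (Ideal.pow_le_pow_right hkl hp)⟩ with hf
      obtain ⟨n₀, hst⟩ := (monotone_stabilizes_iff_noetherian.mpr inferInstance) f
      set T : Ideal A := f n₀ with hT
      have hkey2 : ∀ a ∈ T, ∀ w ∈ (maximalIdeal A) ^ n₀, w * a = 0 := by
        intro a ha w hw
        have := Submodule.mem_colon.mp ha w hw
        rw [smul_eq_mul, Submodule.mem_bot] at this
        rw [mul_comm]
        exact this
      have hkey1 : ∀ a : A, a ∈ T ↔ ∃ k, ∀ w ∈ (maximalIdeal A) ^ k, w * a = 0 := by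
        intro a
        constructor
        · exact fun ha => ⟨n₀, fun w hw => hkey2 a ha w hw⟩
        · rintro ⟨k, hk⟩
          have haf : a ∈ f k := by
            show a ∈ (⊥ : Ideal A).colon (((maximalIdeal A) ^ k : Ideal A) : Set A)
            rw [Submodule.mem_colon]
            intro p hp
            rw [smul_eq_mul, Submodule.mem_bot, mul_comm]
            exact hk p hp
          rcases le_total k n₀ with h | h
          · exact f.mono h haf
          · show a ∈ T
            rw [hst k h]
            exact haf
      have hTtop : T ≠ ⊤ := by
        intro htop
        have h1 : (1 : A) ∈ T := by rw [htop]; exact Submodule.mem_top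
        have hpow : (maximalIdeal A) ^ n₀ = ⊥ := by
          refine le_bot_iff.mp fun w hw => ?_
          rw [Submodule.mem_bot]
          have := hkey2 1 h1 w hw
          rwa [mul_one] at this
        exact h0 (dim_le_zero_of_pow_bot hpow)
      have hTbot : T ≠ ⊥ := by
        obtain ⟨hp, z, hz⟩ := isAssociatedPrime_iff.mp hass
        have hz0 : z ≠ 0 := by
          rintro rfl
          apply hp.ne_top
          rw [hz, eq_top_iff]
          intro r _
          rw [Submodule.mem_colon_singleton, smul_zero]
          exact Submodule.zero_mem _
        have hzT : z ∈ T := by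
          rw [hkey1]
          refine ⟨1, fun w hw => ?_⟩
          rw [pow_one] at hw
          have hw' : w ∈ (⊥ : Submodule A A).colon {z} := hz ▸ hw
          have := Submodule.mem_colon_singleton.mp hw'
          rwa [smul_eq_mul, Submodule.mem_bot] at this
        rw [Submodule.ne_bot_iff]
        exact ⟨z, hzT, hz0⟩
      have hntT : Nontrivial ↥T := Submodule.nontrivial_iff_ne_bot.mpr hTbot
      have hannT : (maximalIdeal A) ^ n₀ ≤ Module.annihilator A ↥T := by
        intro w hw
        rw [mem_ann_submodule]
        intro a ha
        rw [smul_eq_mul]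
        exact hkey2 a ha w hw
      have hdimT : moduleKrullDim A ↥T = 0 := by
        refine le_antisymm (quotdim_le_zero_of_pow_le hannT) moduleKrullDim_nonneg
      have hdimTop : moduleKrullDim A ↥(⊤ : Submodule A A) = 1 := by
        rw [moduleKrullDim_top, hd1]
      refine ⟨2, fun i => if i = 0 then ⊥ else if i = 1 then T else ⊤,
        ⟨by simp, by norm_num, ?_, ?_, ?_⟩, ?_⟩
      · intro i hi
        interval_cases i
        · show (⊥ : Submodule A A) < T
          exact lt_of_le_of_ne bot_le (Ne.symm hTbot)
        · show (T : Submodule A A) < ⊤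
          exact lt_top_iff_ne_top.mpr hTtop
      · intro i hi
        interval_cases i
        · show moduleKrullDim A ↥(⊥ : Submodule A A) < moduleKrullDim A ↥T
          rw [moduleKrullDim_eq_bot_iff.mpr inferInstance, hdimT]
          exact bot_lt_iff_ne_bot.mpr (by norm_num)
        · show moduleKrullDim A ↥T < moduleKrullDim A ↥(⊤ : Submodule A A)
          rw [hdimT, hdimTop]
          norm_num
      · intro i hi N hle hdim
        interval_cases i
        · show N ≤ ⊥
          rw [show moduleKrullDim A
            ↥((fun i => if i = 0 then (⊥ : Submodule A A) else if i = 1 then T else ⊤) (0+1)) =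
              (0 : WithBot ℕ∞) from hdimT] at hdim
          by_contra hNb
          have hne : N ≠ ⊥ := fun h => hNb (le_of_eq h)
          have : Nontrivial ↥N := Submodule.nontrivial_iff_ne_bot.mpr hne
          exact absurd (lt_of_le_of_lt moduleKrullDim_nonneg hdim) (lt_irrefl _)
        · show N ≤ T
          rw [show moduleKrullDim A
            ↥((fun i => if i = 0 then (⊥ : Submodule A A) else if i = 1 then T else ⊤) (1+1)) =
              (1 : WithBot ℕ∞) from hdimTop] at hdim
          rcases eq_or_ne N ⊥ with rfl | hNb
          · exact bot_le
          · have : Nontrivial ↥N := Submodule.nontrivial_iff_ne_bot.mpr hNb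
            have hann : Module.annihilator A ↥N ≠ ⊤ := fun h =>
              (not_subsingleton ↥N) (annihilator_eq_top_iff.mp h)
            obtain ⟨k, hk⟩ := pow_le_of_quotdim_le_zero hann (wb_le_zero_of_lt_one hdim)
            intro a ha
            rw [hkey1]
            refine ⟨k, fun w hw => ?_⟩
            have := (mem_ann_submodule N w).mp (hk hw) a ha
            rwa [smul_eq_mul] at this
      · intro i hi
        interval_cases i
        · -- quotient T / 0
          have e : filtQuot
              (fun i => if i = 0 then (⊥ : Submodule A A) else if i = 1 then T else ⊤) 0
              ≃ₗ[A] ↥T := botQuotEquiv T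
          refine ⟨[], by simp, (LinearEquiv.isRegular_congr e []).mpr (IsRegular.nil A ↥T), ?_⟩
          rw [moduleKrullDim_congr e, hdimT]
          simp
        · -- quotient ⊤ / T
          have e : filtQuot
              (fun i => if i = 0 then (⊥ : Submodule A A) else if i = 1 then T else ⊤) 1
              ≃ₗ[A] A ⧸ T := topQuotEquiv T
          have hntQ : Nontrivial (A ⧸ T) :=
            Submodule.Quotient.nontrivial_iff.mpr hTtop
          have hdimQ : ringKrullDim (A ⧸ T) = 1 := by
            refine wb_eq_one_of ?_ (le_trans (ringKrullDim_quotient_le T) hd)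
            intro hle0
            obtain ⟨k, hk⟩ := pow_le_of_quotdim_le_zero hTtop hle0
            have hpow : (maximalIdeal A) ^ (n₀ + k) = ⊥ := by
              rw [pow_add]
              refine le_bot_iff.mp (Ideal.mul_le.mpr fun r hr s hs => ?_)
              rw [Submodule.mem_bot]
              exact hkey2 s (hk hs) r hr
            exact h0 (dim_le_zero_of_pow_bot hpow)
          rcases exists_reg_or_mem_ass (R := A) (A ⧸ T) with ⟨y, hym, hyreg⟩ | hassQ
          · refine ⟨[y], by simpa using hym, ?_, ?_⟩
            · refine (LinearEquiv.isRegular_congr e [y]).mpr ?_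
              rw [isRegular_cons_iff]
              refine ⟨hyreg, ?_⟩
              have : Nontrivial (QuotSMulTop y (A ⧸ T)) := by
                refine Submodule.Quotient.nontrivial_iff.mpr ?_
                intro htop
                have h1 : (Submodule.Quotient.mk (1:A) : A ⧸ T) ∈
                    (y • ⊤ : Submodule A (A ⧸ T)) := by rw [htop]; exact Submodule.mem_top
                obtain ⟨b, hb⟩ := (mem_smul_top_iff y _).mp h1
                obtain ⟨c, rfl⟩ := Submodule.Quotient.mk_surjective T b
                have hmem : (1 : A) - y * c ∈ T := by
                  rw [← Submodule.Quotient.mk_eq_zero T]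
                  have : (Submodule.Quotient.mk ((1:A) - y * c) : A ⧸ T) =
                      Submodule.Quotient.mk (1:A) - y • Submodule.Quotient.mk c := by
                    rw [Submodule.Quotient.mk_sub, ← Submodule.Quotient.mk_smul, smul_eq_mul]
                  rw [this, hb, sub_self]
                have hunit : IsUnit ((1 : A) - y * c) :=
                  isUnit_one_sub_self_of_mem_nonunits _
                    ((mem_maximalIdeal _).mp (Ideal.mul_mem_right c _ hym))
                exact hTtop (T.eq_top_of_isUnit_mem hmem hunit)
              exact IsRegular.nil A _
            · rw [moduleKrullDim_congr e, moduleKrullDim_quot_ideal, hdimQ]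
              simp
          · -- impossible: maximal ideal associated to A ⧸ T
            exfalso
            obtain ⟨hp', zb, hzb⟩ := isAssociatedPrime_iff.mp hassQ
            obtain ⟨z', rfl⟩ := Submodule.Quotient.mk_surjective T zb
            have hzb0 : (Submodule.Quotient.mk z' : A ⧸ T) ≠ 0 := by
              intro h0'
              apply hp'.ne_top
              rw [hzb, h0', eq_top_iff]
              intro r _
              rw [Submodule.mem_colon_singleton, smul_zero]
              exact Submodule.zero_mem _
            have hz'T : z' ∈ T := by
              rw [hkey1]
              refine ⟨n₀ + 1, fun w hw => ?_⟩
              rw [pow_succ] at hw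
              have hK : (maximalIdeal A) ^ n₀ * maximalIdeal A ≤
                  (⊥ : Ideal A).colon {z'} := by
                refine Ideal.mul_le.mpr fun r hr s hs => ?_
                rw [Submodule.mem_colon_singleton, smul_eq_mul, mul_assoc, Submodule.mem_bot]
                have hsz : s * z' ∈ T := by
                  rw [← Submodule.Quotient.mk_eq_zero T]
                  have h1 : s • (Submodule.Quotient.mk z' : A ⧸ T) = 0 := by
                    have hs' : s ∈ (⊥ : Submodule A (A ⧸ T)).colon
                        {(Submodule.Quotient.mk z' : A ⧸ T)} := hzb ▸ hs
                    exact (Submodule.mem_bot A).mp (Submodule.mem_colon_singleton.mp hs')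
                  rw [← Submodule.Quotient.mk_smul, smul_eq_mul] at h1
                  exact h1
                exact hkey2 _ hsz r hr
              have := Submodule.mem_colon_singleton.mp (hK hw)
              rwa [smul_eq_mul, Submodule.mem_bot] at this
            exact hzb0 ((Submodule.Quotient.mk_eq_zero T).mpr hz'T)

end Main

section Part2

lemma not_seqCM (R : Type*) [CommRing R] [IsDomain R] [IsLocalRing R]
    (hdim : ringKrullDim R = 2)
    (hdepth2 : ∀ rs : List R, rs.length = 2 → (∀ y ∈ rs, y ∈ maximalIdeal R) →
      ¬ RingTheory.Sequence.IsRegular R rs) :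
    ¬ IsSeqCMLocalRing R := by
  rintro ⟨ℓ, D, ⟨hD0, hDl, hlt, hdims, hmax⟩, hCM⟩
  have hdimN : ∀ N : Submodule R R, N ≠ ⊥ → moduleKrullDim R ↥N = ringKrullDim R := by
    intro N hN
    have hann : Module.annihilator R ↥N = ⊥ := by
      obtain ⟨a, haN, ha0⟩ := (Submodule.ne_bot_iff N).mp hN
      ext r
      rw [mem_ann_submodule, Submodule.mem_bot]
      constructor
      · intro h
        have := h a haN
        rw [smul_eq_mul] at this
        exact (mul_eq_zero.mp this).resolve_right ha0
      · rintro rfl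
        intro b _
        rw [zero_smul]
    unfold moduleKrullDim
    rw [hann]
    exact ringKrullDim_eq_of_ringEquiv (RingEquiv.quotientBot R)
  rcases Nat.lt_or_ge ℓ 1 with h1 | h1
  · have hl0 : ℓ = 0 := by omega
    subst hl0
    rw [hD0] at hDl
    have h1 : (1 : R) ∈ (⊥ : Submodule R R) := by rw [hDl]; exact Submodule.mem_top
    exact one_ne_zero ((Submodule.mem_bot R).mp h1)
  rcases Nat.lt_or_ge ℓ 2 with h2 | h2
  · have hl1 : ℓ = 1 := by omega
    subst hl1
    obtain ⟨rs, hmem, hreg, hlen⟩ := hCM 0 (by norm_num)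
    have e : filtQuot D 0 ≃ₗ[R] R :=
      (Submodule.quotEquivOfEqBot _
        (by rw [hD0, Submodule.comap_bot, Submodule.ker_subtype])).trans
        ((LinearEquiv.ofEq _ _ hDl).trans Submodule.topEquiv)
    rw [moduleKrullDim_congr e, moduleKrullDim_self, hdim] at hlen
    have hlen2 : rs.length = 2 := by exact_mod_cast hlen
    exact hdepth2 rs hlen2 hmem ((LinearEquiv.isRegular_congr e rs).mp hreg)
  · have hD1 : D 1 ≠ ⊥ := by
      intro hb
      have := hlt 0 (by omega)
      rw [hD0, hb] at this
      exact lt_irrefl _ this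
    have hD2 : D 2 ≠ ⊥ := by
      intro hb
      have := hlt 1 (by omega)
      rw [hb] at this
      exact not_lt_bot this
    have h := hdims 1 (by omega)
    rw [hdimN _ hD1, hdimN _ hD2] at h
    exact lt_irrefl _ h

end Part2

/-- Let `R` be a 2-dimensional Noetherian local domain of depth 1 (there is a
regular element in the maximal ideal, but no regular sequence of length two), and let `x ≠ 0` be
a nonunit.  Then `R/(x)` is a sequentially Cohen-Macaulay (local) ring, while `R` is not. -/
theorem stmt6 (R : Type) [CommRing R] [IsDomain R] [IsLocalRing R] [IsNoetherianRing R]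
    (hdim : ringKrullDim R = 2)
    (hdepth1 : ∃ y ∈ IsLocalRing.maximalIdeal R, IsSMulRegular R y)
    (hdepth2 : ∀ rs : List R, rs.length = 2 → (∀ y ∈ rs, y ∈ IsLocalRing.maximalIdeal R) →
      ¬ RingTheory.Sequence.IsRegular R rs)
    (x : R) (hx0 : x ≠ 0) (hxu : ¬ IsUnit x)
    [IsLocalRing (R ⧸ Ideal.span {x})] :
    IsSeqCMLocalRing (R ⧸ Ideal.span {x}) ∧ ¬ IsSeqCMLocalRing R := by
  constructor
  · refine seqCM_of_dim_le_one ?_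
    have hc : ∀ c : LTSeries (PrimeSpectrum (R ⧸ Ideal.span {x})),
        (c.length : WithBot ℕ∞) ≤ 1 := by
      intro c
      let f : PrimeSpectrum (R ⧸ Ideal.span {x}) → PrimeSpectrum R := fun q =>
        ⟨Ideal.comap (Ideal.Quotient.mk (Ideal.span {x})) q.asIdeal,
          Ideal.IsPrime.comap _⟩
      have hf : StrictMono f := by
        intro p q hpq
        refine (PrimeSpectrum.asIdeal_lt_asIdeal _ _).mp ?_
        refine lt_of_le_of_ne
          (Ideal.comap_mono ((PrimeSpectrum.asIdeal_le_asIdeal _ _).mpr hpq.le)) ?_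
        intro heq
        exact hpq.ne (PrimeSpectrum.ext
          (Ideal.comap_injective_of_surjective _ Ideal.Quotient.mk_surjective heq))
      have hbot : (⟨⊥, Ideal.bot_prime⟩ : PrimeSpectrum R) < (c.map f hf).head := by
        refine (PrimeSpectrum.asIdeal_lt_asIdeal _ _).mp ?_
        refine lt_of_le_of_ne bot_le ?_
        intro heq
        have hx : x ∈ ((c.map f hf).head).asIdeal := by
          have : (Ideal.Quotient.mk (Ideal.span {x})) x = 0 :=
            Ideal.Quotient.eq_zero_iff_mem.mpr (Ideal.mem_span_singleton_self x)
          show x ∈ Ideal.comap (Ideal.Quotient.mk (Ideal.span {x})) _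
          rw [Ideal.mem_comap, this]
          exact Submodule.zero_mem _
        rw [← heq] at hx
        exact hx0 ((Submodule.mem_bot R).mp hx)
      let c' := (c.map f hf).cons ⟨⊥, Ideal.bot_prime⟩ hbot
      have hlen := Order.LTSeries.length_le_krullDim c'
      have hclen : c'.length = c.length + 1 := by rw [RelSeries.cons_length]; simp
      rw [hclen] at hlen
      have hlen2 : ((c.length + 1 : ℕ) : WithBot ℕ∞) ≤ 2 := le_trans hlen (le_of_eq hdim)
      have : c.length + 1 ≤ 2 := by exact_mod_cast hlen2
      have h1 : c.length ≤ 1 := by omega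
      exact_mod_cast h1
    exact iSup_le hc
  · exact not_seqCM R hdim hdepth2
end

section
/- Let R be a Noetherian ring, F = {F_n} a filtration of ideals of R with F_1 ≠ R such that the Rees algebra R(F) = ⊕_{n≥0} F_n t^n is Noetherian, M a finitely generated R-module, and M = {M_n} an F-filtration with Rees module R(M) finitely generated over R(F). If P ∈ Ass_{R(F)} R(M), then p := P ∩ R ∈ Ass_R M and P = pR[t] ∩ R(F). -/
set_option synthInstance.maxHeartbeats 1000000
set_option maxHeartbeats 1000000

open IsLocalRing

section Rees
variable {R : Type*} [CommRing R]

/-- A filtration `F = {F n}` of ideals: `F 0 = R`, decreasing, `F m * F n ⊆ F (m + n)`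
(so `F n = R` for `n ≤ 0`). -/
structure IdealFiltration (R : Type*) [CommRing R] where
  F : ℤ → Ideal R
  zero_eq : F 0 = ⊤
  antitone : ∀ m n : ℤ, m ≤ n → F n ≤ F m
  mul_le : ∀ m n : ℤ, F m * F n ≤ F (m + n)

/-- The Rees algebra `R(F) = ⊕_{n ≥ 0} F_n tⁿ`, as a subalgebra of `R[t]`. -/
def reesAlg (𝓕 : IdealFiltration R) : Subalgebra R (Polynomial R) where
  carrier := {f | ∀ n : ℕ, f.coeff n ∈ 𝓕.F n}
  add_mem' := fun {a b} ha hb n => by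
    rw [Polynomial.coeff_add]; exact (𝓕.F n).add_mem (ha n) (hb n)
  mul_mem' := fun {a b} ha hb n => by
    rw [Polynomial.coeff_mul]
    refine Submodule.sum_mem _ fun ij hij => ?_
    have h1 : (ij.1 : ℤ) + ij.2 = (n : ℤ) := by
      exact_mod_cast congrArg (fun k : ℕ => (k : ℤ)) (Finset.HasAntidiagonal.mem_antidiagonal.mp hij)
    exact h1 ▸ 𝓕.mul_le _ _ (Ideal.mul_mem_mul (ha ij.1) (hb ij.2))
  algebraMap_mem' := fun r n => by
    simp only [Polynomial.algebraMap_apply, Polynomial.coeff_C]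
    split
    · next h => subst h; rw [show ((0:ℕ):ℤ) = 0 by rfl, 𝓕.zero_eq]; trivial
    · exact zero_mem _

/-- An `F`-filtration `{M n}` of submodules of `M`: `M 0 = M`, decreasing,
`F m • M n ⊆ M (m + n)`. -/
structure ModuleFiltration (𝓕 : IdealFiltration R) (M : Type*) [AddCommGroup M]
    [Module R M] where
  Mn : ℤ → Submodule R M
  zero_eq : Mn 0 = ⊤
  antitone : ∀ m n : ℤ, m ≤ n → Mn n ≤ Mn m
  smul_le : ∀ (m n : ℤ) (r : R) (x : M), r ∈ 𝓕.F m → x ∈ Mn n → r • x ∈ Mn (m + n)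

variable {M : Type*} [AddCommGroup M] [Module R M]

/-- For a submodule `N ⊆ M`, the Rees module `R({Mₙ ∩ N}) = ⊕_{n ≥ 0} tⁿ ⊗ (Mₙ ∩ N)` of the
induced filtration on `N`, as a submodule of `R[t] ⊗_R M = PolynomialModule R M` over the
Rees algebra `R(F)`. -/
def reesSub (𝓕 : IdealFiltration R) (𝓜 : ModuleFiltration 𝓕 M) (N : Submodule R M) :
    Submodule (reesAlg 𝓕) (PolynomialModule R M) where
  carrier := {v | ∀ n : ℕ, v.coeff n ∈ 𝓜.Mn n ⊓ N}
  add_mem' := fun {a b} ha hb n => by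
    exact add_mem (ha n) (hb n)
  zero_mem' := fun n => zero_mem _
  smul_mem' := fun c v hv => by
    intro n
    show ((c : Polynomial R) • v).coeff n ∈ _
    rw [PolynomialModule.smul_apply]
    refine Submodule.sum_mem _ fun ij hij => ?_
    have h1 : (ij.1 : ℤ) + ij.2 = (n : ℤ) := by
      exact_mod_cast congrArg (fun k : ℕ => (k : ℤ)) (Finset.HasAntidiagonal.mem_antidiagonal.mp hij)
    constructor
    · have := 𝓜.smul_le ij.1 ij.2 ((c : Polynomial R).coeff ij.1) (v.coeff ij.2)
        (c.2 ij.1) (hv ij.2).1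
      rwa [h1] at this
    · exact N.smul_mem _ (hv ij.2).2

/-- The Rees module `R(M) = ⊕_{n ≥ 0} tⁿ ⊗ Mₙ` of the filtration `M = {Mₙ}`. -/
abbrev reesMod (𝓕 : IdealFiltration R) (𝓜 : ModuleFiltration 𝓕 M) :
    Submodule (reesAlg 𝓕) (PolynomialModule R M) :=
  reesSub 𝓕 𝓜 ⊤

end Rees

section aux
open Polynomial
variable {R : Type} [CommRing R] {M : Type} [AddCommGroup M] [Module R M]

lemma pm_rsmul_apply (r : R) (v : PolynomialModule R M) (n : ℕ) :
    (r • v).coeff n = r • v.coeff n := rfl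

lemma claimA (f : R[X]) :
    ∀ (N : ℕ) (w : PolynomialModule R M), (∀ n, N ≤ n → w.coeff n = 0) → f • w = 0 →
      (f.coeff f.natDegree ^ N) • w = 0 := by
  intro N
  induction N with
  | zero =>
    intro w hw _
    have : w = 0 := PolynomialModule.ext (Finsupp.ext fun n => hw n (Nat.zero_le n))
    rw [pow_zero, one_smul, this]
  | succ N ih =>
    intro w hw hfw
    set c := f.coeff f.natDegree with hc
    have hW : ∀ n, N ≤ n → (c • w).coeff n = 0 := by
      intro n hn
      rcases eq_or_lt_of_le hn with rfl | h
      · have h0 : (f • w).coeff (f.natDegree + N) = 0 := by rw [hfw]; rfl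
        rw [PolynomialModule.smul_apply] at h0
        rw [Finset.sum_eq_single (f.natDegree, N)] at h0
        · rw [pm_rsmul_apply]; exact h0
        · rintro ⟨i, j⟩ hij hne
          have hij' : i + j = f.natDegree + N := Finset.HasAntidiagonal.mem_antidiagonal.mp hij
          by_cases hi : f.natDegree < i
          · rw [Polynomial.coeff_eq_zero_of_natDegree_lt hi, zero_smul]
          · push_neg at hi
            have : N < j := by
              rcases lt_or_eq_of_le hi with h' | h'
              · omega
              · exfalso; apply hne; rw [h'] at hij' ⊢; congr 1; omega
            rw [hw j (by omega), smul_zero]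
        · intro h; exact absurd (Finset.HasAntidiagonal.mem_antidiagonal.mpr (rfl : f.natDegree + N = f.natDegree + N)) h
      · rw [pm_rsmul_apply, hw n (by omega), smul_zero]
    have hfW : f • (c • w) = 0 := by
      rw [smul_comm, hfw, smul_zero]
    have := ih (c • w) hW hfW
    rw [smul_smul, ← pow_succ] at this
    exact this
end aux

/-- Associated primes of the Rees module: if `P ∈ Ass_{R(F)} R(M)` then
`p = P ∩ R ∈ Ass_R M` and `P = pR[t] ∩ R(F)`. -/
theorem stmt7 (R : Type) [CommRing R] [IsNoetherianRing R]
    (M : Type) [AddCommGroup M] [Module R M] [Module.Finite R M]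
    (𝓕 : IdealFiltration R) (h𝓕 : 𝓕.F 1 ≠ ⊤)
    (hNoeth : IsNoetherianRing ↥(reesAlg 𝓕))
    (𝓜 : ModuleFiltration 𝓕 M) (hfin : Module.Finite ↥(reesAlg 𝓕) ↥(reesMod 𝓕 𝓜))
    (P : Ideal ↥(reesAlg 𝓕)) (hP : P ∈ associatedPrimes ↥(reesAlg 𝓕) ↥(reesMod 𝓕 𝓜)) :
    P.comap (algebraMap R ↥(reesAlg 𝓕)) ∈ associatedPrimes R M ∧
      P = Ideal.comap (reesAlg 𝓕).val
            (Ideal.map (Polynomial.C : R →+* Polynomial R)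
              (P.comap (algebraMap R ↥(reesAlg 𝓕)))) := by
  obtain ⟨hPP, x, hx⟩ := (haveI := hNoeth; isAssociatedPrime_iff.mp hP)
  set p := P.comap (algebraMap R ↥(reesAlg 𝓕)) with hpdef
  have hann : ∀ f : ↥(reesAlg 𝓕), f ∈ P ↔
      (f : Polynomial R) • (x : PolynomialModule R M) = 0 := by
    intro f
    rw [hx, Submodule.mem_colon_singleton, Submodule.mem_bot]
    constructor
    · intro h
      exact congrArg Subtype.val h
    · intro h
      exact Subtype.ext h
  have hmemp : ∀ r : R, r ∈ p ↔ ∀ n : ℕ, r • (x : PolynomialModule R M).coeff n = 0 := by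
    intro r
    rw [hpdef, Ideal.mem_comap, hann]
    have h1 : ((algebraMap R ↥(reesAlg 𝓕) r : ↥(reesAlg 𝓕)) : Polynomial R)
        • (x : PolynomialModule R M) = r • (x : PolynomialModule R M) := by
      rw [show ((algebraMap R ↥(reesAlg 𝓕) r : ↥(reesAlg 𝓕)) : Polynomial R)
        = algebraMap R (Polynomial R) r from rfl, algebraMap_smul]
    rw [h1]
    constructor
    · intro h n
      rw [← pm_rsmul_apply, h]
      rfl
    · intro h
      exact PolynomialModule.ext (Finsupp.ext fun n => h n)
  obtain ⟨N, hN⟩ : ∃ N : ℕ, ∀ n, N ≤ n → (x : PolynomialModule R M).coeff n = 0 := by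
    refine ⟨(Finsupp.support (x : PolynomialModule R M).coeff).sup id + 1, fun n hn => ?_⟩
    have hns : n ∉ Finsupp.support (x : PolynomialModule R M).coeff := by
      intro hmem
      have := Finset.le_sup (f := id) hmem
      simp only [id] at this
      omega
    exact Finsupp.notMem_support_iff.mp hns
  have hstep : ∀ f : ↥(reesAlg 𝓕), f ∈ P →
      (f : Polynomial R).coeff (f : Polynomial R).natDegree ∈ p := by
    intro f hf
    set c := (f : Polynomial R).coeff (f : Polynomial R).natDegree with hcdef
    have h1 := claimA (f : Polynomial R) N (x : PolynomialModule R M) hN ((hann f).mp hf)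
    have h2 : (algebraMap R ↥(reesAlg 𝓕) c) ^ N ∈ P := by
      rw [hann]
      have hcoe : (((algebraMap R ↥(reesAlg 𝓕) c) ^ N : ↥(reesAlg 𝓕)) : Polynomial R)
          = algebraMap R (Polynomial R) (c ^ N) := by
        rw [SubmonoidClass.coe_pow]
        rw [show ((algebraMap R ↥(reesAlg 𝓕) c : ↥(reesAlg 𝓕)) : Polynomial R)
          = algebraMap R (Polynomial R) c from rfl, map_pow]
      rw [hcoe, algebraMap_smul]
      exact h1
    exact Ideal.mem_comap.mpr (hPP.mem_of_pow_mem N h2)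
  have key : ∀ (n : ℕ) (f : ↥(reesAlg 𝓕)), f ∈ P → (f : Polynomial R).natDegree ≤ n →
      ∀ j, (f : Polynomial R).coeff j ∈ p := by
    intro n
    induction n with
    | zero =>
      intro f hf hdeg j
      rcases Nat.eq_zero_or_pos j with rfl | hj
      · have h0 : (f : Polynomial R).natDegree = 0 := Nat.le_zero.mp hdeg
        have := hstep f hf
        rwa [h0] at this
      · rw [Polynomial.coeff_eq_zero_of_natDegree_lt (by omega)]
        exact zero_mem p
    | succ n ih =>
      intro f hf hdeg j
      by_cases hd : (f : Polynomial R).natDegree ≤ n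
      · exact ih f hf hd j
      · have hc : (f : Polynomial R).coeff (f : Polynomial R).natDegree ∈ p := hstep f hf
        by_cases hj : j = (f : Polynomial R).natDegree
        · rw [hj]; exact hc
        · set c := (f : Polynomial R).coeff (f : Polynomial R).natDegree with hcdef
          have hmF : (Polynomial.monomial (f : Polynomial R).natDegree c : Polynomial R)
              ∈ reesAlg 𝓕 := by
            intro k
            rw [Polynomial.coeff_monomial]
            split
            · next h => rw [← h]; exact f.2 (f : Polynomial R).natDegree
            · exact zero_mem _
          have hm : (⟨_, hmF⟩ : ↥(reesAlg 𝓕)) ∈ P := by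
            rw [hann]
            refine PolynomialModule.ext (Finsupp.ext fun k => ?_)
            show ((Polynomial.monomial (f : Polynomial R).natDegree c)
              • (x : PolynomialModule R M)).coeff k = 0
            rw [PolynomialModule.monomial_smul_apply]
            split
            · exact (hmemp c).mp hc _
            · rfl
          have hg : f - ⟨_, hmF⟩ ∈ P := P.sub_mem hf hm
          have hgval : ((f - ⟨_, hmF⟩ : ↥(reesAlg 𝓕)) : Polynomial R)
              = (f : Polynomial R).eraseLead := by
            rw [AddSubgroupClass.coe_sub]
            exact Polynomial.self_sub_monomial_natDegree_leadingCoeff (f : Polynomial R)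
          have hgd : ((f - ⟨_, hmF⟩ : ↥(reesAlg 𝓕)) : Polynomial R).natDegree ≤ n := by
            rw [hgval]
            have := Polynomial.eraseLead_natDegree_le (f : Polynomial R)
            omega
          have := ih _ hg hgd j
          rwa [hgval, Polynomial.eraseLead_coeff_of_ne j hj] at this
  haveI := hPP
  have hpprime : p.IsPrime := Ideal.IsPrime.comap _
  constructor
  · have hx0 : (x : PolynomialModule R M) ≠ 0 := by
      intro h0
      apply hPP.ne_top
      rw [Ideal.eq_top_iff_one, hann, h0, smul_zero]
    have hy : (Finsupp.support (x : PolynomialModule R M).coeff).Nonempty :=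
      Finsupp.support_nonempty_iff.mpr (by rwa [ne_eq, PolynomialModule.coeff_eq_zero])
    have hprod : (∏ k ∈ Finsupp.support (x : PolynomialModule R M).coeff,
        (Submodule.span R {(x : PolynomialModule R M).coeff k}).annihilator) ≤ p := by
      intro r hr
      rw [hmemp]
      intro n
      by_cases hn : n ∈ Finsupp.support (x : PolynomialModule R M).coeff
      · have hle : (∏ k ∈ Finsupp.support (x : PolynomialModule R M).coeff,
            (Submodule.span R {(x : PolynomialModule R M).coeff k}).annihilator)
            ≤ (Submodule.span R {(x : PolynomialModule R M).coeff n}).annihilator :=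
          le_trans Ideal.prod_le_inf (Finset.inf_le hn)
        exact (Submodule.mem_annihilator_span_singleton _ _).mp (hle hr)
      · rw [Finsupp.notMem_support_iff.mp hn, smul_zero]
    obtain ⟨k, hk, hkle⟩ := (hpprime.prod_le).mp hprod
    refine isAssociatedPrime_iff.mpr ⟨hpprime, (x : PolynomialModule R M).coeff k, le_antisymm ?_ ?_⟩
    · intro r hr
      rw [Submodule.mem_colon_singleton, Submodule.mem_bot]
      exact (hmemp r).mp hr k
    · intro r hr
      apply hkle
      rw [Submodule.mem_annihilator_span_singleton]
      rwa [Submodule.mem_colon_singleton, Submodule.mem_bot] at hr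
  · refine le_antisymm ?_ ?_
    · intro f hf
      rw [Ideal.mem_comap]
      exact Ideal.mem_map_C_iff.mpr fun k => key (f : Polynomial R).natDegree f hf le_rfl k
    · intro f hf
      rw [Ideal.mem_comap] at hf
      have hco := Ideal.mem_map_C_iff.mp hf
      rw [hann]
      refine PolynomialModule.ext (Finsupp.ext fun k => ?_)
      show ((f : Polynomial R) • (x : PolynomialModule R M)).coeff k = 0
      rw [PolynomialModule.smul_apply]
      exact Finset.sum_eq_zero fun ij _ => (hmemp _).mp (hco ij.1) ij.2
end

section
/- In the setting of a Noetherian Rees algebra R(F) with F_1 ≠ R and a finitely generated Rees module R(M): for every p ∈ Ass_R M, the prime pR[t] ∩ R(F) is an associated prime of R(M) over R(F). -/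
set_option synthInstance.maxHeartbeats 1000000
set_option maxHeartbeats 1000000

open IsLocalRing

/-- For every `p ∈ Ass_R M`, the prime `pR[t] ∩ R(F)` is an associated prime of
the Rees module `R(M)` over the Rees algebra `R(F)`. -/
theorem stmt8 (R : Type) [CommRing R] [IsNoetherianRing R]
    (M : Type) [AddCommGroup M] [Module R M] [Module.Finite R M]
    (𝓕 : IdealFiltration R) (h𝓕 : 𝓕.F 1 ≠ ⊤)
    (hNoeth : IsNoetherianRing ↥(reesAlg 𝓕))
    (𝓜 : ModuleFiltration 𝓕 M) (hfin : Module.Finite ↥(reesAlg 𝓕) ↥(reesMod 𝓕 𝓜))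
    (p : Ideal R) (hp : p ∈ associatedPrimes R M) :
    Ideal.comap (reesAlg 𝓕).val (Ideal.map (Polynomial.C : R →+* Polynomial R) p) ∈
      associatedPrimes ↥(reesAlg 𝓕) ↥(reesMod 𝓕 𝓜) := by
  obtain ⟨hpp, x, hx⟩ := isAssociatedPrime_iff.mp hp
  have hmem : PolynomialModule.single R 0 x ∈ reesMod 𝓕 𝓜 := by
    show ∀ n : ℕ, (PolynomialModule.single R 0 x).coeff n ∈ 𝓜.Mn n ⊓ ⊤
    intro n
    refine ⟨?_, trivial⟩
    rcases n with _ | n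
    · simpa [𝓜.zero_eq] using Submodule.mem_top
    · simp [PolynomialModule.coeff_single]
  have key : ∀ (f : reesAlg 𝓕) (v : PolynomialModule R M), f • v = (f : Polynomial R) • v :=
    fun _ _ => rfl
  have hcalc : ∀ f : Polynomial R,
      (f • PolynomialModule.single R 0 x = 0) ↔ ∀ n, f.coeff n • x = 0 := by
    intro f
    constructor
    · intro h n
      have := congrArg (fun v : PolynomialModule R M => v.coeff n) h
      simpa using this
    · intro h
      refine PolynomialModule.ext (Finsupp.ext fun n => ?_)
      show (f • PolynomialModule.single R 0 x).coeff n = (0 : PolynomialModule R M).coeff n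
      simpa using h n
  refine isAssociatedPrime_iff.mpr ⟨(@Ideal.isPrime_map_C_of_isPrime _ _ _ hpp).comap _, ⟨_, hmem⟩, ?_⟩
  ext f
  rw [Ideal.mem_comap, Ideal.mem_map_C_iff, Submodule.mem_colon_singleton, Submodule.mem_bot]
  have hsub : (f • (⟨PolynomialModule.single R 0 x, hmem⟩ : reesMod 𝓕 𝓜)
      = 0) ↔ (f : Polynomial R) • PolynomialModule.single R 0 x = 0 := by
    rw [← Subtype.coe_inj]
    exact Iff.rfl
  rw [hsub, hcalc]
  constructor
  · intro h n
    have := hx ▸ h n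
    rwa [Submodule.mem_colon_singleton, Submodule.mem_bot] at this
  · intro h n
    rw [hx, Submodule.mem_colon_singleton, Submodule.mem_bot]
    exact h n
end
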